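/- Let x be an N-position of Moore's NIM game NIM(n,k), and let D = min{ S(y) : x → y is a move and y is a P-position } be the minimum total number of stones remaining after a winning move from x. Then the Smith remoteness value satisfies R(x) = 1 + 2D/(k+1). -/

import Mathlib

/-- Smith's remoteness function for an impartial game with move relation `mv`. -/
def IsRemoteness {α : Type*} (mv : α → α → Prop) (R : α → ℕ) : Prop :=
  ∀ x : α,
    ((∀ y, ¬ mv x y) → R x = 0) ∧
    ((∃ y, mv x y ∧ Even (R y)) →
      ∃ y, mv x y ∧ Even (R y) ∧ R x = R y + 1 ∧ ∀ z, mv x z → Even (R z) → R y ≤ R z) ∧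
    ((∃ y, mv x y) → (∀ y, mv x y → ¬ Even (R y)) →
      ∃ y, mv x y ∧ R x = R y + 1 ∧ ∀ z, mv x z → R z ≤ R y)

/-- A move of Moore's NIM game NIM(n,k): strictly decrease the piles in some
nonempty set of at most `k` indices, leaving all other piles unchanged. -/
def MooreMove {ι : Type*} [Fintype ι] (k : ℕ) (x y : ι → ℕ) : Prop :=
  (∀ i, y i ≤ x i) ∧ y ≠ x ∧ (Finset.univ.filter fun i => y i < x i).card ≤ k

namespace MN

def bitd (j m : ℕ) : ℕ := m / 2^j % 2

lemma bitd_le_one (j m : ℕ) : bitd j m ≤ 1 := Nat.lt_succ_iff.mp (Nat.mod_lt _ (by norm_num))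

lemma bitd_succ (j m : ℕ) : bitd (j+1) m = bitd j (m/2) := by
  unfold bitd
  rw [Nat.div_div_eq_div_mul, pow_succ, mul_comm (2^j) 2, ← Nat.div_div_eq_div_mul]

lemma sum_bitd : ∀ B m, m < 2^B → ∑ j ∈ Finset.range B, 2^j * bitd j m = m := by
  intro B
  induction B with
  | zero => intro m hm; interval_cases m; simp
  | succ B ih =>
    intro m hm
    rw [Finset.sum_range_succ']
    have h2 : m / 2 < 2^B := by
      rw [Nat.div_lt_iff_lt_mul (by norm_num)]
      calc m < 2^(B+1) := hm
      _ = 2^B * 2 := by ring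
    calc (∑ j ∈ Finset.range B, 2^(j+1) * bitd (j+1) m) + 2^0 * bitd 0 m
        = 2 * (∑ j ∈ Finset.range B, 2^j * bitd j (m/2)) + m % 2 := by
          rw [Finset.mul_sum]
          congr 1
          · exact Finset.sum_congr rfl fun j _ => by rw [bitd_succ]; ring
          · simp [bitd]
      _ = 2 * (m / 2) + m % 2 := by rw [ih _ h2]
      _ = m := by omega

lemma bitd_eq_zero_of_dvd {j m : ℕ} (h : 2^(j+1) ∣ m) : bitd j m = 0 := by
  obtain ⟨q, rfl⟩ := h
  unfold bitd
  rw [pow_succ, mul_assoc, Nat.mul_div_cancel_left _ (by positivity), Nat.mul_mod_right]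

lemma dvd_of_bitd_zero : ∀ (t m : ℕ), (∀ j, j < t → bitd j m = 0) → 2^t ∣ m := by
  intro t
  induction t with
  | zero => simp
  | succ t ih =>
    intro m hm
    obtain ⟨q, rfl⟩ := ih m (fun j hj => hm j (by omega))
    have h0 : bitd t (2^t * q) = 0 := hm t (by omega)
    unfold bitd at h0
    rw [Nat.mul_div_cancel_left _ (by positivity)] at h0
    obtain ⟨r, rfl⟩ := Nat.dvd_of_mod_eq_zero h0
    exact ⟨r, by ring⟩

lemma exists_high_bit : ∀ (b a : ℕ), a < b →
    ∃ h, bitd h b = 1 ∧ bitd h a = 0 ∧ ∀ j, h < j → bitd j a = bitd j b := by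
  intro b
  induction b using Nat.strong_induction_on with
  | _ b ih =>
    intro a hab
    by_cases hq : a / 2 = b / 2
    · refine ⟨0, ?_, ?_, ?_⟩
      · simp only [bitd, pow_zero, Nat.div_one]; omega
      · simp only [bitd, pow_zero, Nat.div_one]; omega
      · intro j hj
        obtain ⟨j, rfl⟩ : ∃ j', j = j' + 1 := ⟨j - 1, by omega⟩
        rw [bitd_succ, bitd_succ, hq]
    · have hlt : a / 2 < b / 2 := by omega
      obtain ⟨h, h1, h2, h3⟩ := ih (b/2) (by omega) (a/2) hlt
      refine ⟨h + 1, ?_, ?_, ?_⟩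
      · rw [bitd_succ]; exact h1
      · rw [bitd_succ]; exact h2
      · intro j hj
        obtain ⟨j, rfl⟩ : ∃ j', j = j' + 1 := ⟨j - 1, by omega⟩
        rw [bitd_succ, bitd_succ]
        exact h3 j (by omega)

def dsum {n : ℕ} (j : ℕ) (x : Fin n → ℕ) : ℕ := ∑ i, bitd j (x i)

def MP {n : ℕ} (k : ℕ) (x : Fin n → ℕ) : Prop := ∀ j, (k+1) ∣ dsum j x

lemma dvd_total {n k : ℕ} {x : Fin n → ℕ} (hx : MP k x) : (k+1) ∣ ∑ i, x i := by
  set B := ∑ i, x i with hB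
  have hxB : ∀ i, x i < 2^B := by
    intro i
    calc x i ≤ B := Finset.single_le_sum (fun i _ => Nat.zero_le _) (Finset.mem_univ i)
    _ < 2^B := (Nat.lt_two_pow_self (n := B))
  have heq : ∑ i, x i = ∑ j ∈ Finset.range B, 2^j * dsum j x := by
    have : ∀ j, 2^j * dsum j x = ∑ i, 2^j * bitd j (x i) := fun j => Finset.mul_sum _ _ _
    rw [Finset.sum_congr rfl fun j _ => this j, Finset.sum_comm]
    exact (Finset.sum_congr rfl fun i _ => sum_bitd B (x i) (hxB i)).symm
  rw [hB, heq]
  exact Finset.dvd_sum fun j _ => Dvd.dvd.mul_left (hx j) _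

lemma no_PP {n k : ℕ} {x y : Fin n → ℕ} (hx : MP k x) (hy : MP k y)
    (hm : MooreMove k x y) : False := by
  obtain ⟨hle, hne, hcard⟩ := hm
  have hF : ∃ i, y i < x i := by
    obtain ⟨i, hi⟩ := Function.ne_iff.mp hne
    exact ⟨i, lt_of_le_of_ne (hle i) hi⟩
  set F := Finset.univ.filter (fun i => y i < x i) with hFdef
  classical
  set g : Fin n → ℕ := fun i =>
    if h : y i < x i then (exists_high_bit (x i) (y i) h).choose else 0 with hg
  have gspec : ∀ i, y i < x i → bitd (g i) (x i) = 1 ∧ bitd (g i) (y i) = 0 ∧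
      ∀ j, g i < j → bitd j (y i) = bitd j (x i) := by
    intro i h
    simp only [hg, dif_pos h]
    exact (exists_high_bit (x i) (y i) h).choose_spec
  obtain ⟨i0, hi0F, hmaxi⟩ := F.exists_max_image g (by
    obtain ⟨i, hi⟩ := hF; exact ⟨i, by simp [hFdef, hi]⟩)
  have hi0lt : y i0 < x i0 := by simpa [hFdef] using hi0F
  set J := g i0 with hJ
  set G := Finset.univ.filter (fun i => bitd J (x i) ≠ bitd J (y i)) with hGdef
  have key1 : ∀ i ∈ G, y i < x i ∧ bitd J (x i) = 1 ∧ bitd J (y i) = 0 := by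
    intro i hi
    have hne' : bitd J (x i) ≠ bitd J (y i) := by simpa [hGdef] using hi
    have hyx : y i < x i := by
      rcases lt_or_eq_of_le (hle i) with h | h
      · exact h
      · exact absurd (by rw [h]) hne'
    obtain ⟨s1, s2, s3⟩ := gspec i hyx
    have hgle : g i ≤ J := hmaxi i (by simp [hFdef, hyx])
    rcases lt_or_eq_of_le hgle with h | h
    · exact absurd (s3 J h).symm hne'
    · rw [← h]; exact ⟨hyx, s1, s2⟩
  have hi0G : i0 ∈ G := by
    obtain ⟨s1, s2, _⟩ := gspec i0 hi0lt
    simp [hGdef, hJ, s1, s2]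
  have hsum : dsum J x = dsum J y + G.card := by
    have : ∀ i : Fin n, bitd J (x i) = bitd J (y i) + (if i ∈ G then 1 else 0) := by
      intro i
      by_cases hi : i ∈ G
      · obtain ⟨_, h1, h2⟩ := key1 i hi; simp [hi, h1, h2]
      · have : bitd J (x i) = bitd J (y i) := by
          by_contra hcon; exact hi (by simp [hGdef, hcon])
        simp [hi, this]
    unfold dsum
    rw [Finset.sum_congr rfl fun i _ => this i, Finset.sum_add_distrib]
    congr 1
    rw [Finset.sum_ite_mem, Finset.univ_inter]
    simp
  have hdvdG : (k+1) ∣ G.card := by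
    have := hx J
    rw [hsum] at this
    exact (Nat.dvd_add_right (hy J)).mp this
  have hGF : G ⊆ F := fun i hi => by simp [hFdef, (key1 i hi).1]
  have h1 : 0 < G.card := Finset.card_pos.mpr ⟨i0, hi0G⟩
  have h2 : G.card ≤ k := le_trans (Finset.card_le_card hGF) hcard
  have := Nat.le_of_dvd h1 hdvdG
  omega

lemma bitd_mul_pow {d m : ℕ} (q : ℕ) (h : d ≤ m) : bitd m (2^d * q) = bitd (m-d) q := by
  unfold bitd
  rw [show 2^m = 2^d * 2^(m-d) by rw [← pow_add]; congr 1; omega,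
    ← Nat.div_div_eq_div_mul, Nat.mul_div_cancel_left _ (by positivity)]

lemma bit_lower {j m : ℕ} (h : bitd j m = 1) : 2^(j+1) * (m / 2^(j+1)) + 2^j ≤ m := by
  have h1 : 2^(j+1) * (m / 2^(j+1)) + m % 2^(j+1) = m := Nat.div_add_mod m (2^(j+1))
  have h2 : m % 2^(j+1) / 2^j = 1 := by
    rw [show (2:ℕ)^(j+1) = 2^j * 2 from pow_succ 2 j, Nat.mod_mul_right_div_self]
    exact h
  have h3 : 2^j ≤ m % 2^(j+1) := by
    by_contra hc
    rw [Nat.div_eq_of_lt (by omega)] at h2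
    omega
  omega

lemma aux_move {n : ℕ} (k : ℕ) (hk : 0 < k) :
    ∀ (j : ℕ) (x : Fin n → ℕ) (A : Finset (Fin n)), A.card ≤ k →
    (∀ m, j ≤ m → (k+1) ∣ dsum m x) → (∀ i ∈ A, 2^(j:ℕ) ∣ x i) →
    ∃ (w : Fin n → ℕ) (C : Finset (Fin n)), MP k w ∧ (A ∪ C).card ≤ k ∧ Disjoint A C ∧
      (∀ i ∈ C, w i < x i) ∧ (∀ i, i ∉ A → i ∉ C → w i = x i) ∧
      (∀ i ∈ A, w i < x i + 2^j) := by
  intro j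
  induction j with
  | zero =>
    intro x A hA hx _
    exact ⟨x, ∅, fun m => hx m (Nat.zero_le m), by simpa using hA, Finset.disjoint_empty_right _,
      by simp, fun i _ _ => rfl, fun i _ => by omega⟩
  | succ j ih =>
    intro x A hA hx hA0
    classical
    set U := Finset.univ.filter (fun i => i ∉ A ∧ bitd j (x i) = 1) with hUdef
    have hU : ∀ i ∈ U, i ∉ A ∧ bitd j (x i) = 1 := fun i hi => by simpa [hUdef] using hi
    set s := U.card with hsdef
    have hs : dsum j x = s := by
      have hper : ∀ i : Fin n, bitd j (x i) = if i ∈ U then 1 else 0 := by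
        intro i
        by_cases hiA : i ∈ A
        · have : i ∉ U := fun hi => (hU i hi).1 hiA
          rw [if_neg this]
          exact bitd_eq_zero_of_dvd (hA0 i hiA)
        · by_cases hb : bitd j (x i) = 1
          · rw [if_pos (by simp [hUdef, hiA, hb]), hb]
          · have := bitd_le_one j (x i)
            rw [if_neg (fun hi => hb (hU i hi).2)]
            omega
      unfold dsum
      rw [Finset.sum_congr rfl fun i _ => hper i, Finset.sum_ite_mem, Finset.univ_inter]
      simp [hsdef]
    set r := s % (k+1) with hrdef
    have hrs : r ≤ s := Nat.mod_le _ _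
    have hrk : r ≤ k := by have := Nat.mod_lt s (show 0 < k+1 by omega); omega
    have hmd : s % (k+1) + (k+1) * (s / (k+1)) = s := Nat.mod_add_div s (k+1)
    obtain ⟨M, T, hMU, hTA, hAM, hMs, hdv⟩ : ∃ M T : Finset (Fin n), M ⊆ U ∧ T ⊆ A ∧
        (A ∪ M).card ≤ k ∧ M.card ≤ s ∧ (k+1) ∣ (s + T.card - M.card) := by
      by_cases hcase : r + A.card ≤ k
      · obtain ⟨M, hMU, hMcard⟩ := Finset.exists_subset_card_eq (show r ≤ U.card from hrs)
        refine ⟨M, ∅, hMU, Finset.empty_subset _, ?_, by omega, ?_⟩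
        · calc (A ∪ M).card ≤ A.card + M.card := Finset.card_union_le _ _
          _ ≤ k := by omega
        · exact ⟨s / (k+1), by simp only [Finset.card_empty, hMcard]; omega⟩
      · obtain ⟨T, hTA, hTcard⟩ := Finset.exists_subset_card_eq
          (show k + 1 - r ≤ A.card by omega)
        refine ⟨∅, T, Finset.empty_subset _, hTA, by simpa using hA, by simp, ?_⟩
        refine ⟨s / (k+1) + 1, ?_⟩
        have hexp : (k+1) * (s/(k+1) + 1) = (k+1) * (s/(k+1)) + (k+1) := by ring
        simp only [Finset.card_empty, hTcard]
        omega
    have hMA : ∀ i ∈ M, i ∉ A := fun i hi => (hU i (hMU hi)).1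
    have hTM : ∀ i ∈ T, i ∉ M := fun i hi hiM => hMA i hiM (hTA hi)
    set x' : Fin n → ℕ := fun i =>
      if i ∈ M then 2^(j+1) * (x i / 2^(j+1)) else if i ∈ T then x i + 2^j else x i with hx'def
    -- bits at level ≥ j+1 unchanged
    have hhigh : ∀ m, j + 1 ≤ m → ∀ i, bitd m (x' i) = bitd m (x i) := by
      intro m hm i
      by_cases hiM : i ∈ M
      · have : x' i = 2^(j+1) * (x i / 2^(j+1)) := by simp [hx'def, hiM]
        rw [this, bitd_mul_pow _ (by omega)]
        unfold bitd
        rw [Nat.div_div_eq_div_mul, ← pow_add, show j+1+(m-(j+1)) = m from by omega]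
      · by_cases hiT : i ∈ T
        · obtain ⟨q, hq⟩ := hA0 i (hTA hiT)
          have hx'i : x' i = 2^j * (2*q+1) := by
            simp only [hx'def, if_neg hiM, if_pos hiT, hq]
            ring
          rw [hx'i, bitd_mul_pow _ (by omega), hq, bitd_mul_pow _ (by omega)]
          obtain ⟨d, hd⟩ : ∃ d, m - j = d + 1 := ⟨m - j - 1, by omega⟩
          rw [hd, bitd_succ, show (2*q+1)/2 = q by omega,
            show m - (j+1) = d by omega]
        · have : x' i = x i := by simp only [hx'def]; rw [if_neg hiM, if_neg hiT]
          rw [this]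
    -- bit j values
    have hbitj : ∀ i, bitd j (x' i) + (if i ∈ M then 1 else 0)
        = bitd j (x i) + (if i ∈ T then 1 else 0) := by
      intro i
      by_cases hiM : i ∈ M
      · have h1 : bitd j (x' i) = 0 := by
          have : x' i = 2^(j+1) * (x i / 2^(j+1)) := by simp [hx'def, hiM]
          exact this ▸ bitd_eq_zero_of_dvd ⟨_, rfl⟩
        have h2 : i ∉ T := fun h => hTM i h hiM
        rw [h1, if_pos hiM, if_neg h2, (hU i (hMU hiM)).2]
      · by_cases hiT : i ∈ T
        · obtain ⟨q, hq⟩ := hA0 i (hTA hiT)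
          have hx'i : x' i = 2^j * (2*q+1) := by
            simp only [hx'def, if_neg hiM, if_pos hiT, hq]; ring
          have h1 : bitd j (x' i) = 1 := by
            rw [hx'i, bitd_mul_pow _ le_rfl]
            simp only [Nat.sub_self, bitd, pow_zero, Nat.div_one]
            omega
          have h2 : bitd j (x i) = 0 := bitd_eq_zero_of_dvd ⟨q, hq⟩
          rw [h1, h2, if_neg hiM, if_pos hiT]
        · have : x' i = x i := by simp only [hx'def]; rw [if_neg hiM, if_neg hiT]
          rw [this, if_neg hiM, if_neg hiT]
    have hdsj : dsum j x' + M.card = s + T.card := by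
      have h1 : ∑ i, (bitd j (x' i) + (if i ∈ M then 1 else 0))
          = ∑ i, (bitd j (x i) + (if i ∈ T then 1 else 0)) :=
        Finset.sum_congr rfl fun i _ => hbitj i
      rw [Finset.sum_add_distrib, Finset.sum_add_distrib] at h1
      rw [Finset.sum_ite_mem, Finset.sum_ite_mem, Finset.univ_inter, Finset.univ_inter] at h1
      simp only [Finset.sum_const, smul_eq_mul, mul_one] at h1
      have h2 : dsum j x' + M.card = dsum j x + T.card := h1
      rw [hs] at h2
      exact h2
    -- apply IH
    obtain ⟨w, C', hwMP, hcard, hdisj, hlt, heq, hA2⟩ := ih x' (A ∪ M) hAM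
      (by
        intro m hm
        rcases Nat.eq_or_lt_of_le hm with hm' | hm'
        · rw [← hm']
          have : dsum j x' = s + T.card - M.card := by omega
          rw [this]; exact hdv
        · have : dsum m x' = dsum m x :=
            Finset.sum_congr rfl fun i _ => hhigh m (by omega) i
          rw [this]; exact hx m (by omega))
      (by
        intro i hi
        rcases Finset.mem_union.mp hi with hiA | hiM
        · have hiM : i ∉ M := fun h => hMA i h hiA
          obtain ⟨q, hq⟩ := hA0 i hiA
          by_cases hiT : i ∈ T
          · simp only [hx'def, if_neg hiM, if_pos hiT, hq]
            exact ⟨2*q + 1, by ring⟩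
          · simp only [hx'def, if_neg hiM, if_neg hiT, hq]
            exact ⟨2*q, by ring⟩
        · simp only [hx'def, if_pos hiM]
          exact ⟨2 * (x i / 2^(j+1)), by ring⟩)
    refine ⟨w, M ∪ C', hwMP, ?_, ?_, ?_, ?_, ?_⟩
    · rwa [← Finset.union_assoc]
    · rw [Finset.disjoint_union_right]
      exact ⟨Finset.disjoint_left.mpr (fun i hiA hiM => hMA i hiM hiA),
        Finset.disjoint_of_subset_left Finset.subset_union_left hdisj⟩
    · intro i hi
      rcases Finset.mem_union.mp hi with hiM | hiC
      · have h1 := hA2 i (Finset.mem_union_right _ hiM)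
        have h2 : x' i = 2^(j+1) * (x i / 2^(j+1)) := by simp [hx'def, hiM]
        have h3 := bit_lower (hU i (hMU hiM)).2
        omega
      · have hiAM : i ∉ A ∪ M := Finset.disjoint_right.mp hdisj hiC
        have hiM : i ∉ M := fun h => hiAM (Finset.mem_union_right _ h)
        have hiT : i ∉ T := fun h => hiAM (Finset.mem_union_left _ (hTA h))
        have : x' i = x i := by simp [hx'def, hiM, hiT]
        rw [← this]
        exact hlt i hiC
    · intro i hiA hiMC
      have hiM : i ∉ M := fun h => hiMC (Finset.mem_union_left _ h)
      have hiC : i ∉ C' := fun h => hiMC (Finset.mem_union_right _ h)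
      have hiT : i ∉ T := fun h => hiA (hTA h)
      have : x' i = x i := by simp [hx'def, hiM, hiT]
      rw [← this]
      exact heq i (by simp [hiA, hiM]) hiC
    · intro i hiA
      have h1 := hA2 i (Finset.mem_union_left _ hiA)
      have hiM : i ∉ M := fun h => hMA i h hiA
      have h2 : x' i ≤ x i + 2^j := by
        by_cases hiT : i ∈ T
        · simp [hx'def, hiM, hiT]
        · simp [hx'def, hiM, hiT]
      have h3 : (2:ℕ)^(j+1) = 2^j + 2^j := by rw [pow_succ]; ring
      omega

lemma exists_P_move {n k : ℕ} (hk : 0 < k) {x : Fin n → ℕ} (h : ¬ MP k x) :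
    ∃ y, MooreMove k x y ∧ MP k y := by
  set B := ∑ i, x i with hB
  have hxB : ∀ i, x i < 2^B := fun i =>
    lt_of_le_of_lt (Finset.single_le_sum (fun i _ => Nat.zero_le _) (Finset.mem_univ i))
      ((Nat.lt_two_pow_self (n := B)))
  have hx : ∀ m, B ≤ m → (k+1) ∣ dsum m x := by
    intro m hm
    have : dsum m x = 0 := Finset.sum_eq_zero fun i _ => by
      unfold bitd
      rw [Nat.div_eq_of_lt (lt_of_lt_of_le (hxB i) (Nat.pow_le_pow_right (by norm_num) hm))]
      rfl
    rw [this]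
    exact dvd_zero _
  obtain ⟨w, C, hMP, hcard, _, hlt, heq, _⟩ :=
    aux_move k hk B x ∅ (by simpa using Nat.le_of_lt hk) hx (by simp)
  have hwx : ∀ i, w i ≤ x i := by
    intro i
    by_cases hiC : i ∈ C
    · exact le_of_lt (hlt i hiC)
    · exact le_of_eq (heq i (Finset.notMem_empty i) hiC)
  refine ⟨w, ⟨hwx, ?_, ?_⟩, hMP⟩
  · intro he; exact h (he ▸ hMP)
  · calc (Finset.univ.filter fun i => w i < x i).card
        ≤ C.card := Finset.card_le_card (fun i hi => by
          by_contra hiC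
          have := heq i (Finset.notMem_empty i) hiC
          simp only [Finset.mem_filter] at hi
          omega)
      _ ≤ k := by simpa using hcard

lemma halve {n k : ℕ} : ∀ (t : ℕ) (y w : Fin n → ℕ) (i : Fin n), MP k y → MP k w →
    (∀ p, 2^t ∣ y p) → bitd t (y i) = 1 → w i + 1 = y i → (∀ p, w p ≤ y p) →
    (Finset.univ.filter fun p => w p < y p).card ≤ k + 1 →
    ∑ p, y p ≤ ∑ p, w p + (k+1) := by
  intro t
  induction t with
  | zero =>
    intro y w i hy hw _ hbit hwi hle hcard
    have hyodd : y i % 2 = 1 := by simpa [bitd] using hbit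
    set Y' : Fin n → ℕ := fun p => y p / 2 with hY'def
    set W' : Fin n → ℕ := fun p => w p / 2 with hW'def
    have hY' : MP k Y' := fun j => by
      have : dsum j Y' = dsum (j+1) y :=
        Finset.sum_congr rfl fun p _ => (bitd_succ j (y p)).symm
      rw [this]; exact hy (j+1)
    have hW' : MP k W' := fun j => by
      have : dsum j W' = dsum (j+1) w :=
        Finset.sum_congr rfl fun p _ => (bitd_succ j (w p)).symm
      rw [this]; exact hw (j+1)
    have hiF : i ∈ Finset.univ.filter (fun p => w p < y p) := by
      simp only [Finset.mem_filter, Finset.mem_univ, true_and]; omega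
    have hsub : (Finset.univ.filter fun p => W' p < Y' p)
        ⊆ (Finset.univ.filter fun p => w p < y p).erase i := by
      intro p hp
      simp only [Finset.mem_filter, Finset.mem_univ, true_and, hY'def, hW'def] at hp
      have hwp : w p < y p := by
        by_contra hc
        have : w p = y p := le_antisymm (hle p) (by omega)
        rw [this] at hp; omega
      have hpi : p ≠ i := by
        rintro rfl
        omega
      exact Finset.mem_erase.mpr ⟨hpi, by simp [hwp]⟩
    have hC' : ∀ p, Y' p = W' p := by
      intro p
      have hem : Finset.univ.filter (fun p => W' p < Y' p) = ∅ := by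
        by_contra hne
        obtain ⟨q, hq⟩ := Finset.nonempty_of_ne_empty hne
        apply no_PP hY' hW'
        refine ⟨fun p => Nat.div_le_div_right (hle p), ?_, ?_⟩
        · intro he
          simp only [Finset.mem_filter, Finset.mem_univ, true_and] at hq
          rw [he] at hq; omega
        · calc (Finset.univ.filter fun p => W' p < Y' p).card
              ≤ ((Finset.univ.filter fun p => w p < y p).erase i).card :=
                Finset.card_le_card hsub
            _ = (Finset.univ.filter fun p => w p < y p).card - 1 :=
                Finset.card_erase_of_mem hiF
            _ ≤ k := by omega
      have : p ∉ Finset.univ.filter (fun p => W' p < Y' p) := by rw [hem]; simp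
      simp only [Finset.mem_filter, Finset.mem_univ, true_and, not_lt] at this
      exact le_antisymm this (Nat.div_le_div_right (hle p))
    calc ∑ p, y p ≤ ∑ p, (w p + if p ∈ Finset.univ.filter (fun p => w p < y p)
          then 1 else 0) := by
          apply Finset.sum_le_sum
          intro p _
          have h1 := hC' p
          simp only [hY'def, hW'def] at h1
          by_cases hp : w p < y p
          · simp only [Finset.mem_filter, Finset.mem_univ, true_and, hp, if_true]
            omega
          · have : w p = y p := le_antisymm (hle p) (by omega)
            simp [this]
      _ = ∑ p, w p + (Finset.univ.filter fun p => w p < y p).card := by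
          rw [Finset.sum_add_distrib, Finset.sum_ite_mem, Finset.univ_inter]
          simp
      _ ≤ ∑ p, w p + (k+1) := by omega
  | succ t ih =>
    intro y w i hy hw h2t hbit hwi hle hcard
    have hyev : ∀ p, y p % 2 = 0 := by
      intro p
      obtain ⟨q, hq⟩ := h2t p
      have : y p = (2^t * q) * 2 := by rw [hq, pow_succ]; ring
      omega
    set Y' : Fin n → ℕ := fun p => y p / 2 with hY'def
    set W' : Fin n → ℕ := fun p => w p / 2 with hW'def
    have hY' : MP k Y' := fun j => by
      have : dsum j Y' = dsum (j+1) y :=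
        Finset.sum_congr rfl fun p _ => (bitd_succ j (y p)).symm
      rw [this]; exact hy (j+1)
    have hW' : MP k W' := fun j => by
      have : dsum j W' = dsum (j+1) w :=
        Finset.sum_congr rfl fun p _ => (bitd_succ j (w p)).symm
      rw [this]; exact hw (j+1)
    have hIH : ∑ p, Y' p ≤ ∑ p, W' p + (k+1) := by
      apply ih Y' W' i hY' hW'
      · intro p
        obtain ⟨q, hq⟩ := h2t p
        refine ⟨q, ?_⟩
        have : y p = (2^t * q) * 2 := by rw [hq, pow_succ]; ring
        simp only [hY'def]
        omega
      · rw [hY'def]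
        rw [← bitd_succ]
        exact hbit
      · have := hyev i
        simp only [hW'def, hY'def]
        omega
      · exact fun p => Nat.div_le_div_right (hle p)
      · calc (Finset.univ.filter fun p => W' p < Y' p).card
            ≤ (Finset.univ.filter fun p => w p < y p).card := by
              apply Finset.card_le_card
              intro p hp
              simp only [Finset.mem_filter, Finset.mem_univ, true_and,
                hY'def, hW'def] at hp ⊢
              by_contra hc
              have : w p = y p := le_antisymm (hle p) (by omega)
              rw [this] at hp; omega
          _ ≤ k + 1 := hcard
    have hwodd : w i % 2 = 1 := by have := hyev i; omega
    have hd0 : (k+1) ≤ dsum 0 w := by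
      apply Nat.le_of_dvd _ (hw 0)
      have h1 : bitd 0 (w i) = 1 := by simpa [bitd] using hwodd
      calc 0 < bitd 0 (w i) := by omega
        _ ≤ dsum 0 w := Finset.single_le_sum (f := fun p => bitd 0 (w p))
            (fun p _ => Nat.zero_le _) (Finset.mem_univ i)
    have hsy : ∑ p, y p = 2 * ∑ p, Y' p := by
      rw [Finset.mul_sum]
      exact Finset.sum_congr rfl fun p _ => by have := hyev p; simp only [hY'def]; omega
    have hsw : ∑ p, w p = 2 * ∑ p, W' p + dsum 0 w := by
      have : ∀ p : Fin n, w p = 2 * W' p + bitd 0 (w p) := by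
        intro p
        simp only [hW'def, bitd, pow_zero, Nat.div_one]
        omega
      rw [Finset.sum_congr rfl fun p _ => this p, Finset.sum_add_distrib, Finset.mul_sum]
      rfl
    omega

lemma move_sum_lt {n k : ℕ} {x y : Fin n → ℕ} (h : MooreMove k x y) :
    ∑ i, y i < ∑ i, x i := by
  obtain ⟨i, hi⟩ := Function.ne_iff.mp h.2.1
  exact Finset.sum_lt_sum (fun i _ => h.1 i)
    ⟨i, Finset.mem_univ i, lt_of_le_of_ne (h.1 i) hi⟩

lemma move_single {n k : ℕ} (hk : 0 < k) {x : Fin n → ℕ} {i : Fin n} (hi : 0 < x i) :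
    MooreMove k x (Function.update x i (x i - 1)) := by
  refine ⟨?_, ?_, ?_⟩
  · intro p
    by_cases hp : p = i
    · subst hp; rw [Function.update_self]; omega
    · rw [Function.update_of_ne hp]
  · intro he
    have := congrFun he i
    rw [Function.update_self] at this
    omega
  · calc (Finset.univ.filter fun p => Function.update x i (x i - 1) p < x p).card
        ≤ ({i} : Finset (Fin n)).card := by
          apply Finset.card_le_card
          intro p hp
          simp only [Finset.mem_filter, Finset.mem_univ, true_and] at hp
          by_contra hpi
          rw [Function.update_of_ne (by simpa using hpi)] at hp
          omega
      _ ≤ k := by rw [Finset.card_singleton]; omega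

lemma nclause {n k : ℕ} {R : (Fin n → ℕ) → ℕ} (hR : IsRemoteness (MooreMove k) R)
    {z : Fin n → ℕ} (hz : ¬ Even (R z)) :
    ∃ w, MooreMove k z w ∧ Even (R w) ∧ R z = R w + 1 ∧
      ∀ u, MooreMove k z u → Even (R u) → R w ≤ R u := by
  by_cases h : ∃ w, MooreMove k z w ∧ Even (R w)
  · exact (hR z).2.1 h
  · exfalso
    push_neg at h
    by_cases h2 : ∃ w, MooreMove k z w
    · obtain ⟨y, hmv, hRz, _⟩ := (hR z).2.2 h2 h
      have hodd := h y hmv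
      rw [Nat.not_even_iff] at hodd hz
      omega
    · push_neg at h2
      exact hz ((hR z).1 h2 ▸ (⟨0, rfl⟩ : Even (0:ℕ)))

lemma main {n k : ℕ} (hk : 0 < k) (R : (Fin n → ℕ) → ℕ)
    (hR : IsRemoteness (MooreMove k) R) :
    ∀ s (x : Fin n → ℕ), ∑ i, x i = s →
      (Even (R x) ↔ MP k x) ∧ (MP k x → R x = 2 * ((∑ i, x i) / (k+1))) := by
  intro s
  induction s using Nat.strong_induction_on with
  | _ s IH =>
  intro x hs
  by_cases hP : MP k x
  · by_cases h0 : s = 0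
    · have hx0 : ∀ i, x i = 0 := fun i =>
        (Finset.sum_eq_zero_iff.mp (hs.trans h0)) i (Finset.mem_univ i)
      have hnomv : ∀ y, ¬ MooreMove k x y := by
        rintro y ⟨h1, h2, _⟩
        apply h2
        funext i
        have := h1 i
        rw [hx0 i] at this ⊢
        omega
      have hR0 : R x = 0 := (hR x).1 hnomv
      refine ⟨iff_of_true (hR0 ▸ (⟨0, rfl⟩ : Even (0:ℕ))) hP, fun _ => ?_⟩
      have hsum0 : ∑ i, x i = 0 := hs.trans h0
      rw [hR0, hsum0]
      simp
    · -- s > 0, x is a P-position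
      have hchild : ∀ y, MooreMove k x y → ¬ Even (R y) := by
        intro y hmv
        have hy : ¬ MP k y := fun hPy => no_PP hP hPy hmv
        have hlt : ∑ i, y i < s := hs ▸ move_sum_lt hmv
        exact fun he => hy ((IH _ hlt y rfl).1.mp he)
      have hex : ∃ i, 0 < x i := by
        by_contra hc
        push_neg at hc
        exact h0 (hs ▸ Finset.sum_eq_zero fun i _ => by have := hc i; omega)
      obtain ⟨i0, hi0⟩ := hex
      have hmv0 : ∃ y, MooreMove k x y := ⟨_, move_single hk hi0⟩
      obtain ⟨y0, hmvy0, hRx, hmax⟩ := (hR x).2.2 hmv0 hchild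
      have hEvenRx : Even (R x) := by
        have hodd := hchild y0 hmvy0
        rw [Nat.not_even_iff] at hodd
        rw [Nat.even_iff, hRx]
        omega
      refine ⟨iff_of_true hEvenRx hP, fun _ => ?_⟩
      have hdvd : (k+1) ∣ s := hs ▸ dvd_total hP
      -- upper bound
      have hup : ∀ y, MooreMove k x y → R y + 1 ≤ 2 * (s/(k+1)) := by
        intro y hmv
        obtain ⟨w, hmw, hew, hRy, _⟩ := nclause hR (hchild y hmv)
        have hSy : ∑ i, y i < s := hs ▸ move_sum_lt hmv
        have hWlt : ∑ i, w i < s := lt_trans (move_sum_lt hmw) hSy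
        obtain ⟨hiff, hform⟩ := IH _ hWlt w rfl
        have hMPw := hiff.mp hew
        have hRw := hform hMPw
        have hq : (∑ i, w i)/(k+1) < s/(k+1) :=
          Nat.div_lt_div_of_lt_of_dvd hdvd hWlt
        rw [hRy, hRw]
        omega
      have hub : R x ≤ 2 * (s/(k+1)) := by
        rw [hRx]
        exact hup y0 hmvy0
      -- lower bound via a min-lowbit pile
      have hbadex : ∃ j, dsum j x ≠ 0 := by
        obtain ⟨h', hb1, _, _⟩ := exists_high_bit (x i0) 0 hi0
        refine ⟨h', fun hz => ?_⟩
        have hb0 : bitd h' (x i0) = 0 :=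
          (Finset.sum_eq_zero_iff.mp hz) i0 (Finset.mem_univ i0)
        omega
      have ht1 : dsum (Nat.find hbadex) x ≠ 0 := Nat.find_spec hbadex
      have ht2 : ∀ j, j < Nat.find hbadex → dsum j x = 0 := by
        intro j hj
        by_contra hnz
        exact Nat.find_min hbadex hj hnz
      set t := Nat.find hbadex with htdef
      have hdvdall : ∀ p, 2^t ∣ x p := by
        intro p
        apply dvd_of_bitd_zero
        intro j hj
        exact (Finset.sum_eq_zero_iff.mp (ht2 j hj)) p (Finset.mem_univ p)
      obtain ⟨i, hbit⟩ : ∃ i, bitd t (x i) = 1 := by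
        by_contra hc
        push_neg at hc
        apply ht1
        apply Finset.sum_eq_zero
        intro p _
        have h1 := bitd_le_one t (x p)
        have h2 := hc p
        omega
      have hxi : 0 < x i := by
        by_contra hc
        have : x i = 0 := by omega
        rw [this] at hbit
        simp [bitd] at hbit
      set z := Function.update x i (x i - 1) with hzdef
      have hzx : ∀ p, z p ≤ x p := by
        intro p
        by_cases hp : p = i
        · subst hp; rw [hzdef, Function.update_self]; omega
        · rw [hzdef, Function.update_of_ne hp]
      have hzi : z i = x i - 1 := by rw [hzdef, Function.update_self]
      have hmvz : MooreMove k x z := move_single hk hxi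
      obtain ⟨w, hmw, hew, hRz, _⟩ := nclause hR (hchild z hmvz)
      have hwz : ∀ p, w p ≤ z p := hmw.1
      have hwx : ∀ p, w p ≤ x p := fun p => le_trans (hwz p) (hzx p)
      have hSw : ∑ p, w p < s :=
        lt_trans (move_sum_lt hmw) (hs ▸ move_sum_lt hmvz)
      obtain ⟨hiffw, hformw⟩ := IH _ hSw w rfl
      have hMPw := hiffw.mp hew
      have hwi : w i + 1 = x i := by
        rcases Nat.lt_or_ge (w i) (z i) with hlt | hge
        · exfalso
          apply no_PP hP hMPw
          refine ⟨hwx, ?_, ?_⟩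
          · intro he
            have := congrFun he i
            omega
          · calc (Finset.univ.filter fun p => w p < x p).card
                ≤ (Finset.univ.filter fun p => w p < z p).card := by
                  apply Finset.card_le_card
                  intro p hp
                  simp only [Finset.mem_filter, Finset.mem_univ, true_and] at hp ⊢
                  by_cases hpi : p = i
                  · subst hpi; exact hlt
                  · rw [hzdef, Function.update_of_ne hpi]; exact hp
              _ ≤ k := hmw.2.2
        · have := hwz i
          omega
      have hcardb : (Finset.univ.filter fun p => w p < x p).card ≤ k + 1 := by
        calc (Finset.univ.filter fun p => w p < x p).card
            ≤ (insert i (Finset.univ.filter fun p => w p < z p)).card := by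
              apply Finset.card_le_card
              intro p hp
              simp only [Finset.mem_filter, Finset.mem_univ, true_and] at hp
              rcases eq_or_ne p i with rfl | hpi
              · exact Finset.mem_insert_self _ _
              · apply Finset.mem_insert_of_mem
                simp only [Finset.mem_filter, Finset.mem_univ, true_and]
                rw [hzdef, Function.update_of_ne hpi]
                exact hp
          _ ≤ (Finset.univ.filter fun p => w p < z p).card + 1 :=
              Finset.card_insert_le _ _
          _ ≤ k + 1 := by have := hmw.2.2; omega
      have hlow : s ≤ ∑ p, w p + (k+1) :=
        hs ▸ halve t x w i hP hMPw hdvdall hbit hwi hwx hcardb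
      have hdw : (k+1) ∣ ∑ p, w p := dvd_total hMPw
      have hRw := hformw hMPw
      have hlb : 2 * (s/(k+1)) ≤ R x := by
        have h1 : R z ≤ R y0 := hmax z hmvz
        have h2 : s/(k+1) ≤ (∑ p, w p)/(k+1) + 1 := by
          calc s/(k+1) ≤ (∑ p, w p + (k+1))/(k+1) := Nat.div_le_div_right hlow
            _ = (∑ p, w p)/(k+1) + 1 := Nat.add_div_right _ (by omega)
        rw [hRx]
        omega
      have hfin : R x = 2 * (s/(k+1)) := le_antisymm hub hlb
      rw [hfin, hs]
  · obtain ⟨y, hmv, hPy⟩ := exists_P_move hk hP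
    have hSy : ∑ i, y i < s := hs ▸ move_sum_lt hmv
    have hEy : Even (R y) := (IH _ hSy y rfl).1.mpr hPy
    obtain ⟨w, _, hew, hRx, _⟩ := (hR x).2.1 ⟨y, hmv, hEy⟩
    have hodd : ¬ Even (R x) := by
      rw [Nat.even_iff] at hew
      rw [Nat.not_even_iff, hRx]
      omega
    exact ⟨iff_of_false hodd hP, fun h => absurd h hP⟩

end MN

theorem moore_remoteness_of_nposition (n k : ℕ) (hk : 0 < k) (hkn : k ≤ n)
    (R : (Fin n → ℕ) → ℕ) (hR : IsRemoteness (MooreMove k) R)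
    (x : Fin n → ℕ) (hx : ¬ Even (R x)) (D : ℕ)
    (hD1 : ∃ y, MooreMove k x y ∧ Even (R y) ∧ ∑ i, y i = D)
    (hD2 : ∀ y, MooreMove k x y → Even (R y) → D ≤ ∑ i, y i) :
    R x = 1 + 2 * D / (k + 1) := by
  obtain ⟨y1, hmv1, hev1, hS1⟩ := hD1
  obtain ⟨ys, hmvs, hevs, hRx, hmin⟩ := (hR x).2.1 ⟨y1, hmv1, hev1⟩
  obtain ⟨hiffs, hforms⟩ := MN.main hk R hR (∑ i, ys i) ys rfl
  obtain ⟨hiff1, hform1⟩ := MN.main hk R hR (∑ i, y1 i) y1 rfl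
  have hMPs := hiffs.mp hevs
  have hMP1 := hiff1.mp hev1
  have hRys := hforms hMPs
  have hRy1 := hform1 hMP1
  have hdvds : (k+1) ∣ ∑ i, ys i := MN.dvd_total hMPs
  have hdvd1 : (k+1) ∣ D := hS1 ▸ MN.dvd_total hMP1
  have hle1 : R ys ≤ R y1 := hmin y1 hmv1 hev1
  have hle2 : D ≤ ∑ i, ys i := hD2 ys hmvs hevs
  -- from R ys ≤ R y1 deduce ∑ ys ≤ D
  obtain ⟨a, ha⟩ := hdvds
  obtain ⟨b, hb⟩ := hdvd1
  have hqa : (∑ i, ys i) / (k+1) = a := by rw [ha]; exact Nat.mul_div_cancel_left a (by omega)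
  have hqb : D / (k+1) = b := by rw [hb]; exact Nat.mul_div_cancel_left b (by omega)
  have hab : a ≤ b := by
    rw [hRys, hRy1, hS1, hqa, hqb] at hle1
    omega
  have hsd : ∑ i, ys i = D := by
    have : ∑ i, ys i ≤ D := by
      rw [ha, hb]
      exact Nat.mul_le_mul_left _ hab
    omega
  rw [hRx, hRys, hsd, hqb, hb, Nat.mul_div_assoc 2 ⟨b, rfl⟩,
    Nat.mul_div_cancel_left b (by omega : 0 < k + 1)]
  omega
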